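/- (Upper bound on the space derivative for the inviscid Burgers equation.) Fix T > 0. Let V : [0,T] × ℝ → ℝ and φ : ℝ → ℝ be twice continuously differentiable with sup_{s,x} |V_x(s,x)| + sup_{s,x} |V_xx(s,x)| < ∞, sup_x φ''(x) < ∞ and sup_x |φ'(x)| < ∞. Suppose u : [0,T] × ℝ → ℝ is twice continuously differentiable and satisfies u_t + ½(u²)_x = V_x on [0,T] × ℝ with u(0,·) = φ'. Then for every t ∈ [0,T], sup_{0≤s≤t} sup_x u_x(s,x) ≤ sup_x φ''(x) + t·sup_{s,x} V_xx(s,x). -/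

import Mathlib

open Set Metric


/-- **Upper bound on the space derivative of solutions of the forced inviscid Burgers
equation.**  If `u` is a `C²` solution of `u_t + ½(u²)_x = V_x` on `[0,T] × ℝ` with
`u(0,·) = φ'`, where `V_x, V_xx` are uniformly bounded, `φ''` is bounded above and `φ'`
is bounded, then `u_x(s,x) ≤ sup_y φ''(y) + t · sup_{(r,y) ∈ [0,T]×ℝ} V_xx(r,y)` for all
`0 ≤ s ≤ t ≤ T`. -/
theorem burgers_space_deriv_upper_bound (T : ℝ) (hT : 0 < T)
    (V : ℝ → ℝ → ℝ) (hV : ContDiff ℝ 2 fun p : ℝ × ℝ => V p.1 p.2)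
    (φ : ℝ → ℝ) (hφ : ContDiff ℝ 2 φ)
    (u : ℝ → ℝ → ℝ) (hu : ContDiff ℝ 2 fun p : ℝ × ℝ => u p.1 p.2)
    (hVbdd : ∃ C, ∀ s ∈ Set.Icc (0:ℝ) T, ∀ y,
      |deriv (V s) y| + |deriv (deriv (V s)) y| ≤ C)
    (hφ''bdd : ∃ C, ∀ y, deriv (deriv φ) y ≤ C)
    (hφ'bdd : ∃ C, ∀ y, |deriv φ y| ≤ C)
    (heq : ∀ s ∈ Set.Icc (0:ℝ) T, ∀ y,
      deriv (fun r => u r y) s + (1 / 2) * deriv (fun z => (u s z) ^ 2) y = deriv (V s) y)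
    (hinit : ∀ y, u 0 y = deriv φ y) :
    ∀ t ∈ Set.Icc (0:ℝ) T, ∀ s ∈ Set.Icc (0:ℝ) t, ∀ y,
      deriv (u s) y ≤ (⨆ z : ℝ, deriv (deriv φ) z)
        + t * ⨆ p : Set.Icc (0:ℝ) T × ℝ, deriv (deriv (V (p.1 : ℝ))) p.2 := by
  obtain ⟨C, hC⟩ := hVbdd
  have h0T : (0:ℝ) ∈ Icc (0:ℝ) T := ⟨le_rfl, hT.le⟩
  have hC0 : 0 ≤ C := le_trans (by positivity) (hC 0 h0T 0)
  have hCx : ∀ t ∈ Icc (0:ℝ) T, ∀ z, |deriv (V t) z| ≤ C := fun t ht z =>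
    le_trans (le_add_of_nonneg_right (abs_nonneg _)) (hC t ht z)
  have hCxx : ∀ t ∈ Icc (0:ℝ) T, ∀ z, |deriv (deriv (V t)) z| ≤ C := fun t ht z =>
    le_trans (le_add_of_nonneg_left (abs_nonneg _)) (hC t ht z)
  set U : ℝ × ℝ → ℝ := fun p => u p.1 p.2 with hUdef
  set ux : ℝ × ℝ → ℝ := fun p => fderiv ℝ U p ((0:ℝ),(1:ℝ)) with huxdef
  have hux1 : ContDiff ℝ 1 ux :=
    (hu.fderiv_right (m := 1) (by norm_num)).clm_apply contDiff_const
  have huxc : Continuous ux := hux1.continuous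
  have hUD : ∀ p : ℝ × ℝ, HasFDerivAt U (fderiv ℝ U p) p := fun p =>
    (hu.differentiable (by norm_num) p).hasFDerivAt
  have hudiff : ∀ t x, HasDerivAt (u t) (ux (t,x)) x := by
    intro t x
    have h2 : HasDerivAt (fun z : ℝ => ((t,z) : ℝ × ℝ)) (0,1) x := by
      simpa using ((hasDerivAt_const x t).prodMk (hasDerivAt_id x))
    exact (hUD (t,x)).comp_hasDerivAt x h2
  have hux_deriv : ∀ t x, deriv (u t) x = ux (t,x) := fun t x => (hudiff t x).deriv
  have hUt : ∀ t x, HasDerivAt (fun r => u r x) (fderiv ℝ U (t,x) (1,0)) t := by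
    intro t x
    have h2 : HasDerivAt (fun r : ℝ => ((r,x) : ℝ × ℝ)) (1,0) t := by
      simpa using ((hasDerivAt_id t).prodMk (hasDerivAt_const t x))
    exact (hUD (t,x)).comp_hasDerivAt t h2
  have hDux : ∀ (p : ℝ × ℝ) (v : ℝ × ℝ), HasFDerivAt (fun q => fderiv ℝ U q v)
      ((fderiv ℝ (fderiv ℝ U) p).flip v) p := by
    intro p v
    have hD : ContDiff ℝ 1 (fderiv ℝ U) := hu.fderiv_right (m := 1) (by norm_num)
    have hB : HasFDerivAt (fderiv ℝ U) (fderiv ℝ (fderiv ℝ U) p) p :=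
      (hD.differentiable (by norm_num) p).hasFDerivAt
    simpa using hB.clm_apply (hasFDerivAt_const v p)
  have hsymm : ∀ (p v w : ℝ × ℝ),
      fderiv ℝ (fderiv ℝ U) p v w = fderiv ℝ (fderiv ℝ U) p w v := by
    intro p v w
    have hD : ContDiff ℝ 1 (fderiv ℝ U) := hu.fderiv_right (m := 1) (by norm_num)
    exact second_derivative_symmetric (fun q => hUD q)
      ((hD.differentiable (by norm_num) p).hasFDerivAt) v w
  have hVd : ∀ t x, HasDerivAt (deriv (V t)) (deriv (deriv (V t)) x) x := by
    intro t x
    have hVt : ContDiff ℝ 2 (V t) := hV.comp (contDiff_const.prodMk contDiff_id)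
    have h2 : ContDiff ℝ ((1:ℕ)+1) (V t) := by exact_mod_cast hVt
    have hd := (contDiff_succ_iff_deriv.mp h2).2.2
    exact ((hd.differentiable (by norm_num)) x).hasDerivAt
  -- pointwise PDE
  have hpde : ∀ t ∈ Icc (0:ℝ) T, ∀ x,
      fderiv ℝ U (t,x) (1,0) = deriv (V t) x - u t x * ux (t,x) := by
    intro t ht x
    have h1 := heq t ht x
    have h2 : deriv (fun r => u r x) t = fderiv ℝ U (t,x) (1,0) := (hUt t x).deriv
    have h3 : deriv (fun z => (u t z)^2) x = 2 * u t x * ux (t,x) := by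
      have := ((hudiff t x).fun_pow 2).deriv
      rw [this]; ring
    rw [h2, h3] at h1; linarith
  -- differentiated PDE
  have hpde' : ∀ t ∈ Icc (0:ℝ) T, ∀ x,
      fderiv ℝ (fderiv ℝ U) (t,x) ((0:ℝ),(1:ℝ)) (1,0)
        = deriv (deriv (V t)) x - ux (t,x)^2
          - u t x * (fderiv ℝ (fderiv ℝ U) (t,x) ((0:ℝ),(1:ℝ)) ((0:ℝ),(1:ℝ))) := by
    intro t ht x
    have hembed : HasDerivAt (fun z : ℝ => ((t,z) : ℝ × ℝ)) (0,1) x := by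
      simpa using ((hasDerivAt_const x t).prodMk (hasDerivAt_id x))
    have hF1 : HasDerivAt (fun z => fderiv ℝ U (t,z) (1,0))
        (fderiv ℝ (fderiv ℝ U) (t,x) ((0:ℝ),(1:ℝ)) (1,0)) x := by
      have := (hDux (t,x) (1,0)).comp_hasDerivAt x hembed
      simpa [Function.comp_def] using this
    have huxz : HasDerivAt (fun z => ux (t,z))
        (fderiv ℝ (fderiv ℝ U) (t,x) ((0:ℝ),(1:ℝ)) ((0:ℝ),(1:ℝ))) x := by
      have := (hDux (t,x) ((0:ℝ),(1:ℝ))).comp_hasDerivAt x hembed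
      simpa [Function.comp_def] using this
    have hF2 : HasDerivAt (fun z => deriv (V t) z - u t z * ux (t,z))
        (deriv (deriv (V t)) x - (ux (t,x) * ux (t,x) + u t x * (fderiv ℝ (fderiv ℝ U) (t,x)
          ((0:ℝ),(1:ℝ)) ((0:ℝ),(1:ℝ))))) x :=
      (hVd t x).sub ((hudiff t x).mul huxz)
    have hfun : (fun z => fderiv ℝ U (t,z) ((1:ℝ),(0:ℝ)))
        = fun z => deriv (V t) z - u t z * ux (t,z) := funext fun z => hpde t ht z
    rw [hfun] at hF1
    have hEq := hF1.unique hF2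
    rw [hEq]; ring
  -- suprema
  haveI : Nonempty (Icc (0:ℝ) T) := ⟨⟨0, h0T⟩⟩
  set A := ⨆ z : ℝ, deriv (deriv φ) z with hAdef
  set M := ⨆ p : Icc (0:ℝ) T × ℝ, deriv (deriv (V (p.1 : ℝ))) p.2 with hMdef
  have hbddM : BddAbove (range fun p : Icc (0:ℝ) T × ℝ => deriv (deriv (V (p.1 : ℝ))) p.2) :=
    ⟨C, forall_mem_range.mpr fun p => le_trans (le_abs_self _) (hCxx p.1 p.1.2 p.2)⟩
  have hMle : ∀ t ∈ Icc (0:ℝ) T, ∀ x, deriv (deriv (V t)) x ≤ M := fun t ht x =>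
    le_ciSup hbddM (⟨⟨t, ht⟩, x⟩ : Icc (0:ℝ) T × ℝ)
  obtain ⟨Cφ, hCφ⟩ := hφ''bdd
  have hbddA : BddAbove (range fun z : ℝ => deriv (deriv φ) z) :=
    ⟨Cφ, forall_mem_range.mpr fun z => hCφ z⟩
  have hAle : ∀ z, deriv (deriv φ) z ≤ A := fun z => le_ciSup hbddA z
  have hM0 : 0 ≤ M := by
    by_contra hM
    push_neg at hM
    set x := (2*C+1) / (-M) with hxdef
    have hx : 0 < x := by
      apply div_pos (by linarith) (by linarith)
    obtain ⟨c, _, hceq⟩ := exists_hasDerivAt_eq_slope (deriv (V 0)) (deriv (deriv (V 0))) hx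
      ((fun z _ => ((hVd 0 z).differentiableAt.continuousAt.continuousWithinAt)))
      (fun z _ => hVd 0 z)
    have h1 : deriv (deriv (V 0)) c ≤ M := hMle 0 h0T c
    have hMx : M * x = -(2*C+1) := by
      rw [hxdef]
      field_simp [ne_of_lt hM]
    have h2 : (deriv (V 0) x - deriv (V 0) 0) / (x - 0) ≤ M := hceq ▸ h1
    rw [sub_zero] at h2
    have h3 : deriv (V 0) x - deriv (V 0) 0 ≤ M * x := (div_le_iff₀ hx).mp h2
    have h4 := abs_le.mp (hCx 0 h0T x)
    have h5 := abs_le.mp (hCx 0 h0T 0)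
    linarith
  -- main argument
  intro t ht s hs y
  have hsT : s ∈ Icc (0:ℝ) T := ⟨hs.1, hs.2.trans ht.2⟩
  suffices h : ux (s, y) ≤ A + s * M by
    rw [hux_deriv]
    calc ux (s,y) ≤ A + s * M := h
      _ ≤ A + t * M := by nlinarith [hs.2, hM0]
  -- characteristic via Picard-Lindelöf with clamped field
  set K : ℝ := |u s y| + T * C + 1 with hKdef
  have hK0 : 0 ≤ K := by positivity
  obtain ⟨f, hfs, hf⟩ : ∃ f : ℝ → ℝ, f s = y ∧ ∀ r ∈ Icc 0 s,
      HasDerivWithinAt f (max (-K) (min K (u r (f r)))) (Icc 0 s) r := by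
    set R : ℝ := K * T + 1 with hRdef
    have hR : 0 ≤ R := by positivity
    obtain ⟨L₀, hL₀⟩ := (isCompact_Icc.prod (isCompact_closedBall y R)).exists_bound_of_continuousOn
      (huxc.continuousOn (s := (Icc (0:ℝ) T) ×ˢ closedBall y R))
    have hL₀0 : 0 ≤ L₀ := le_trans (norm_nonneg _) (hL₀ (0, y) (by simp [h0T, hR]))
    have hlipu : ∀ r ∈ Icc (0:ℝ) s, LipschitzOnWith L₀.toNNReal (u r) (closedBall y R) := by
      intro r hr
      apply LipschitzOnWith.of_dist_le_mul
      intro a ha b hb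
      rw [Real.dist_eq, Real.dist_eq]
      have := (convex_closedBall y R).norm_image_sub_le_of_norm_hasDerivWithin_le
        (f := u r) (f' := fun x => ux (r,x))
        (fun x _ => (hudiff r x).hasDerivWithinAt)
        (fun x hx => hL₀ (r,x) (mk_mem_prod (⟨hr.1, hr.2.trans hsT.2⟩) hx)) hb ha
      simpa [Real.norm_eq_abs, max_eq_left hL₀0, Real.toNNReal] using this
    have hclamp : LipschitzWith 1 (fun z : ℝ => max (-K) (min K z)) :=
      (LipschitzWith.id.const_min K).const_max (-K)
    have hpl : IsPicardLindelof (fun r x => max (-K) (min K (u r x)))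
        (tmin := 0) (tmax := s) ⟨s, hsT.1, le_rfl⟩ y R.toNNReal 0 K.toNNReal L₀.toNNReal := by
      constructor
      · intro r hr
        rw [Real.coe_toNNReal _ hR]
        simpa [Function.comp_def] using (hclamp.comp_lipschitzOnWith (hlipu r hr))
      · intro x _
        exact (continuous_const.max (continuous_const.min
          (hu.continuous.comp (continuous_id.prodMk continuous_const)))).continuousOn
      · intro r _ x _
        rw [Real.coe_toNNReal _ hK0, Real.norm_eq_abs, abs_le]
        exact ⟨le_max_left _ _, max_le (by linarith) (min_le_left _ _)⟩
      · norm_num [Real.coe_toNNReal _ hR, Real.coe_toNNReal _ hK0, max_eq_right hsT.1]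
        nlinarith [hsT.2, hsT.1]
    exact hpl.exists_eq_forall_mem_Icc_hasDerivWithinAt₀
  set g : ℝ → ℝ := fun r => u r (f r) with hgdef
  have hfc : ContinuousOn f (Icc 0 s) := fun r hr => (hf r hr).continuousWithinAt
  have hgc : ContinuousOn g (Icc 0 s) :=
    hu.continuous.comp_continuousOn (continuousOn_id.prodMk hfc)
  have hgs : g s = u s y := by rw [hgdef]; simp [hfs]
  -- true ODE where the clamp is inactive
  have hfODE : ∀ r ∈ Icc (0:ℝ) s, |g r| ≤ K → HasDerivWithinAt f (g r) (Icc 0 s) r := by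
    intro r hr hle
    have hz := abs_le.mp hle
    have := hf r hr
    rwa [min_eq_right hz.2, max_eq_right hz.1] at this
  have hODE : ∀ r ∈ Icc (0:ℝ) s, |g r| ≤ K →
      HasDerivWithinAt g (deriv (V r) (f r)) (Icc 0 s) r := by
    intro r hr hle
    have hpath : HasDerivWithinAt (fun q => ((q, f q) : ℝ × ℝ)) (1, g r) (Icc 0 s) r :=
      (hasDerivWithinAt_id r _).prodMk (hfODE r hr hle)
    have hcomp := (hUD (r, f r)).comp_hasDerivWithinAt r hpath
    have h1 : ((1:ℝ), g r) = ((1:ℝ),(0:ℝ)) + g r • ((0:ℝ),(1:ℝ)) := by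
      simp [Prod.ext_iff]
    have h2 : fderiv ℝ U (r, f r) (1, g r) = deriv (V r) (f r) := by
      rw [h1, map_add, map_smul, smul_eq_mul, hpde r ⟨hr.1, hr.2.trans hsT.2⟩ (f r)]
      have hxx : fderiv ℝ U (r, f r) ((0:ℝ),(1:ℝ)) = ux (r, f r) := rfl
      rw [hxx]
      simp only [hgdef]
      ring
    rw [h2] at hcomp
    exact hcomp
  -- connectedness argument: the a priori bound holds on all of [0,s]
  have habs : ∀ r ∈ Icc (0:ℝ) s, |g r - g s| ≤ C * (s - r) := by
    set E := {e : ℝ | e ∈ Icc (0:ℝ) s ∧ ∀ r ∈ Icc e s, |g r - g s| ≤ C * (s - r)} with hEdef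
    have hsE : s ∈ E := ⟨⟨hsT.1, le_rfl⟩, fun r hr => by
      have : r = s := le_antisymm hr.2 hr.1
      simp [this]⟩
    have hEne : E.Nonempty := ⟨s, hsE⟩
    have hEbdd : BddBelow E := ⟨0, fun e he => he.1.1⟩
    set τ := sInf E with hτdef
    have hτ0 : 0 ≤ τ := le_csInf hEne fun e he => he.1.1
    have hτs : τ ≤ s := csInf_le hEbdd hsE
    have hKgood : ∀ r ∈ Icc (0:ℝ) s, |g r - g s| ≤ C * (s - r) → |g r| ≤ K - 1 := by
      intro r hr hb
      have h1 : |g r| ≤ |g s| + C * (s - r) := by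
        have := abs_sub_abs_le_abs_sub (g r) (g s)
        linarith
      have h2 : C * (s - r) ≤ C * T := by nlinarith [hr.1, hsT.2]
      rw [hgs] at h1
      rw [hKdef]; linarith
    have hP1 : ∀ r ∈ Icc τ s, r ≠ τ → |g r - g s| ≤ C * (s - r) := by
      intro r hr hne
      have hlt : τ < r := lt_of_le_of_ne hr.1 (Ne.symm hne)
      obtain ⟨e, heE, helt⟩ := exists_lt_of_csInf_lt hEne hlt
      exact heE.2 r ⟨helt.le, hr.2⟩
    have hPτ : |g τ - g s| ≤ C * (s - τ) := by
      rcases eq_or_lt_of_le hτs with heq' | hlt'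
      · rw [heq']; simp
      · have hcw : ContinuousWithinAt (fun r => |g r - g s| - C * (s - r)) (Ioc τ s) τ :=
          ((((hgc.sub continuousOn_const).abs.sub
              (continuousOn_const.mul (continuousOn_const.sub continuousOn_id)))).continuousWithinAt
              ⟨hτ0, hτs⟩).mono (fun z hz => ⟨hτ0.trans hz.1.le, hz.2⟩)
        haveI : (nhdsWithin τ (Ioc τ s)).NeBot := by
          rw [← mem_closure_iff_nhdsWithin_neBot, closure_Ioc (ne_of_lt hlt')]
          exact ⟨le_rfl, hτs⟩
        have hev : ∀ᶠ r in nhdsWithin τ (Ioc τ s), (fun r => |g r - g s| - C * (s - r)) r ≤ 0 :=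
          eventually_mem_nhdsWithin.mono (fun r hr => by
            have := hP1 r ⟨hr.1.le, hr.2⟩ (ne_of_gt hr.1)
            simp only [sub_nonpos]
            exact this)
        have hle0 := le_of_tendsto hcw hev
        simp only [sub_nonpos] at hle0
        exact hle0
    have hτE : τ ∈ E := by
      refine ⟨⟨hτ0, hτs⟩, fun r hr => ?_⟩
      rcases eq_or_ne r τ with hre | hre
      · rw [hre]; exact hPτ
      · exact hP1 r hr hre
    have hτeq : τ = 0 := by
      by_contra hne
      have hτpos : 0 < τ := lt_of_le_of_ne hτ0 (Ne.symm hne)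
      have hgτ : |g τ| ≤ K - 1 := hKgood τ ⟨hτ0, hτs⟩ hPτ
      have hcont : ContinuousWithinAt g (Icc 0 s) τ := hgc.continuousWithinAt ⟨hτ0, hτs⟩
      rw [Metric.continuousWithinAt_iff] at hcont
      obtain ⟨δ, hδ, hδprop⟩ := hcont 1 one_pos
      set τ' := max 0 (τ - δ/2) with hτ'def
      have hτ'0 : 0 ≤ τ' := le_max_left _ _
      have hτ'lt : τ' < τ := by
        rw [hτ'def, max_lt_iff]
        exact ⟨hτpos, by linarith⟩
      have hτ's : τ' ≤ s := hτ'lt.le.trans hτs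
      have hDsub : Icc τ' τ ⊆ Icc 0 s := fun z hz => ⟨hτ'0.trans hz.1, hz.2.trans hτs⟩
      have hgK : ∀ r ∈ Icc τ' τ, |g r| ≤ K := by
        intro r hr
        have hdist : dist r τ < δ := by
          rw [Real.dist_eq, abs_lt]
          constructor
          · have : τ - δ/2 ≤ τ' := le_max_right _ _
            linarith [hr.1]
          · linarith [hr.2, hδ]
        have := hδprop (hDsub hr) hdist
        rw [Real.dist_eq] at this
        have h2 : |g r| ≤ |g τ| + |g r - g τ| := by
          have := abs_sub_abs_le_abs_sub (g r) (g τ)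
          linarith
        rw [hKdef] at hgτ ⊢
        linarith
      have hderiv : ∀ r ∈ Icc τ' τ, HasDerivWithinAt g (deriv (V r) (f r)) (Icc τ' τ) r :=
        fun r hr => (hODE r (hDsub hr) (hgK r hr)).mono hDsub
      have hbound : ∀ r ∈ Icc τ' τ, ‖deriv (V r) (f r)‖ ≤ C := by
        intro r hr
        have hrT : r ∈ Icc (0:ℝ) T := ⟨(hDsub hr).1, (hDsub hr).2.trans hsT.2⟩
        simpa [Real.norm_eq_abs] using hCx r hrT (f r)
      have hmvt : ∀ r ∈ Icc τ' τ, |g r - g τ| ≤ C * (τ - r) := by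
        intro r hr
        have := (convex_Icc τ' τ).norm_image_sub_le_of_norm_hasDerivWithin_le hderiv hbound
          ⟨hτ'lt.le, le_rfl⟩ hr
        rw [Real.norm_eq_abs, Real.norm_eq_abs] at this
        calc |g r - g τ| ≤ C * |r - τ| := this
          _ = C * (τ - r) := by rw [abs_sub_comm, abs_of_nonneg (by linarith [hr.2])]
      have hτ'E : τ' ∈ E := by
        refine ⟨⟨hτ'0, hτ's⟩, fun r hr => ?_⟩
        rcases le_or_gt τ r with hcase | hcase
        · exact hτE.2 r ⟨hcase, hr.2⟩
        · have h1 := hmvt r ⟨hr.1, hcase.le⟩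
          have h2 := hPτ
          calc |g r - g s| ≤ |g r - g τ| + |g τ - g s| := abs_sub_le _ _ _
            _ ≤ C * (τ - r) + C * (s - τ) := add_le_add h1 h2
            _ = C * (s - r) := by ring
      have := csInf_le hEbdd hτ'E
      linarith
    intro r hr
    exact (hτeq ▸ hτE).2 r hr
  have hgK : ∀ r ∈ Icc (0:ℝ) s, |g r| ≤ K := fun r hr =>
    le_trans (by
      have h1 : |g r| ≤ |g s| + C * (s - r) := by
        have := abs_sub_abs_le_abs_sub (g r) (g s)
        linarith [habs r hr]
      have h2 : C * (s - r) ≤ C * T := by nlinarith [hr.1, hsT.2]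
      rw [hgs] at h1
      rw [hKdef]
      linarith : |g r| ≤ K - 1) (by linarith)
  -- the Riccati bound along the characteristic
  set W : ℝ → ℝ := fun r => ux (r, f r) with hWdef
  have hWc : ContinuousOn W (Icc 0 s) :=
    huxc.comp_continuousOn (continuousOn_id.prodMk hfc)
  have hW : ∀ r ∈ Icc (0:ℝ) s,
      HasDerivWithinAt W (deriv (deriv (V r)) (f r) - (W r)^2) (Icc 0 s) r := by
    intro r hr
    have hrT : r ∈ Icc (0:ℝ) T := ⟨hr.1, hr.2.trans hsT.2⟩
    have hpath : HasDerivWithinAt (fun q => ((q, f q) : ℝ × ℝ)) (1, g r) (Icc 0 s) r :=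
      (hasDerivWithinAt_id r _).prodMk (hfODE r hr (hgK r hr))
    have hcomp := (hDux (r, f r) ((0:ℝ),(1:ℝ))).comp_hasDerivWithinAt r hpath
    have h1 : ((1:ℝ), g r) = ((1:ℝ),(0:ℝ)) + g r • ((0:ℝ),(1:ℝ)) := by
      simp [Prod.ext_iff]
    have h2 : ((fderiv ℝ (fderiv ℝ U) (r, f r)).flip ((0:ℝ),(1:ℝ))) (1, g r)
        = deriv (deriv (V r)) (f r) - (W r)^2 := by
      rw [h1, map_add, map_smul]
      simp only [ContinuousLinearMap.flip_apply, smul_eq_mul]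
      rw [hsymm (r, f r) ((1:ℝ),(0:ℝ)) ((0:ℝ),(1:ℝ))]
      rw [hpde' r hrT (f r)]
      simp only [hWdef, huxdef, hgdef]
      ring
    rw [h2] at hcomp
    exact hcomp
  set Z : ℝ → ℝ := fun r => W r - M * r with hZdef
  have hZanti : AntitoneOn Z (Icc 0 s) := by
    apply antitoneOn_of_deriv_nonpos (convex_Icc 0 s)
    · exact (hWc.sub (continuousOn_const.mul continuousOn_id))
    · intro r hr
      rw [interior_Icc] at hr
      have hWr : HasDerivAt W (deriv (deriv (V r)) (f r) - (W r)^2) r :=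
        (hW r (Ioo_subset_Icc_self hr)).hasDerivAt (Icc_mem_nhds hr.1 hr.2)
      exact ((hWr.sub ((hasDerivAt_id r).const_mul M)).differentiableAt).differentiableWithinAt
    · intro r hr
      rw [interior_Icc] at hr
      have hrs : r ∈ Icc (0:ℝ) s := Ioo_subset_Icc_self hr
      have hWr : HasDerivAt W (deriv (deriv (V r)) (f r) - (W r)^2) r :=
        (hW r hrs).hasDerivAt (Icc_mem_nhds hr.1 hr.2)
      have hZr : HasDerivAt Z (deriv (deriv (V r)) (f r) - (W r)^2 - M * 1) r :=
        hWr.sub ((hasDerivAt_id r).const_mul M)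
      rw [hZr.deriv]
      have hVb : deriv (deriv (V r)) (f r) ≤ M := hMle r ⟨hrs.1, hrs.2.trans hsT.2⟩ (f r)
      nlinarith [sq_nonneg (W r)]
  have hZineq : Z s ≤ Z 0 := hZanti ⟨le_rfl, hsT.1⟩ ⟨hsT.1, le_rfl⟩ hsT.1
  have hW0 : W 0 ≤ A := by
    have hu0 : u 0 = deriv φ := funext hinit
    have : W 0 = deriv (deriv φ) (f 0) := by
      rw [hWdef]
      simp only
      rw [← hux_deriv 0 (f 0), hu0]
    rw [this]
    exact hAle (f 0)
  have hWs : W s = ux (s, y) := by rw [hWdef]; simp [hfs]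
  have hfin : W s - M * s ≤ W 0 - M * 0 := hZineq
  rw [hWs] at hfin
  linarith
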